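/- Let p ∈ ℕ, x ∈ ℝ, r > 0, Λ ≥ 0, S a finite index set, and for each I ∈ S let x_I ∈ ℝ be a node and ψ_I ∈ ℝ a shape-function value such that: (reproduction) Σ_{I∈S} ψ_I·(x_I − x)^k equals 1 if k = 0 and equals 0 for 1 ≤ k ≤ p; (locality) x_I ∈ [x − r, x + r] whenever ψ_I ≠ 0; and (stability) Σ_{I∈S} |ψ_I| ≤ Λ. Then for every function u : ℝ → ℝ that is (p+1)-times continuously differentiable on [x − r, x + r], |Σ_{I∈S} ψ_I·u(x_I) − u(x)| ≤ Λ · (r^{p+1}/(p+1)!) · sup_{t ∈ [x−r, x+r]} |u^{(p+1)}(t)|. -/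

import Mathlib

open Set

/-- Two-sided Taylor remainder (Lagrange form) with center an interior point. -/
lemma taylor_remainder_two_sided {u : ℝ → ℝ} {a b x y : ℝ} {n : ℕ} (hab : a < b)
    (hx : x ∈ Set.Ioo a b) (hy : y ∈ Set.Icc a b)
    (hu : ContDiffOn ℝ (n + 1 : ℕ) u (Set.Icc a b)) :
    ∃ c ∈ Set.Icc a b, u y - taylorWithinEval u n (Set.Icc a b) x y =
      iteratedDerivWithin (n + 1) u (Set.Icc a b) c * (y - x) ^ (n + 1)
        / ((n + 1).factorial : ℝ) := by
  have hf : ContDiffOn ℝ n u (Icc a b) := hu.of_le (by exact_mod_cast Nat.le_succ n)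
  have hf' : DifferentiableOn ℝ (iteratedDerivWithin n u (Icc a b)) (Ioo a b) :=
    (hu.differentiableOn_iteratedDerivWithin (by exact_mod_cast n.lt_succ_self)
      (uniqueDiffOn_Icc hab)).mono Ioo_subset_Icc_self
  have hφc : ContinuousOn (fun t => taylorWithinEval u n (Icc a b) t y) (Icc a b) :=
    continuousOn_taylorWithinEval (uniqueDiffOn_Icc hab) hf
  rcases lt_trichotomy y x with h | h | h
  · -- y < x : mean value on [y, x]
    have hsub : Ioo y x ⊆ Ioo a b := Ioo_subset_Ioo hy.1 hx.2.le
    obtain ⟨c, hc, hmvt⟩ := exists_ratio_hasDerivAt_eq_ratio_slope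
      (fun t => taylorWithinEval u n (Icc a b) t y)
      (fun t => ((n.factorial : ℝ)⁻¹ * (y - t) ^ n) • iteratedDerivWithin (n + 1) u (Icc a b) t)
      h (hφc.mono (Icc_subset_Icc hy.1 hx.2.le))
      (fun t ht => taylorWithinEval_hasDerivAt_Ioo y hab (hsub ht) hf hf')
      (fun t => (y - t) ^ (n + 1)) (fun t => -(n + 1) * (y - t) ^ n)
      (by fun_prop) (fun t _ => monomial_has_deriv_aux t y n)
    refine ⟨c, Icc_subset_Icc hy.1 hx.2.le (Ioo_subset_Icc_self hc), ?_⟩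
    have hyc : (y - c) ^ n ≠ 0 := pow_ne_zero _ (by have := hc.1; intro hh; nlinarith [sub_eq_zero.mp hh])
    simp only [taylorWithinEval_self, smul_eq_mul, sub_self, zero_pow (Nat.succ_ne_zero n)] at hmvt
    have hfac : ((n + 1).factorial : ℝ) = (n + 1) * n.factorial := by
      rw [Nat.factorial_succ]; push_cast; ring
    rw [hfac]
    have hnf : (n.factorial : ℝ) ≠ 0 := Nat.cast_ne_zero.mpr n.factorial_ne_zero
    have hn1 : ((n : ℝ) + 1) ≠ 0 := by positivity
    rw [eq_div_iff (mul_ne_zero hn1 hnf)]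
    field_simp at hmvt
    have h2 : ((y - x) ^ (n + 1) * iteratedDerivWithin (n + 1) u (Icc a b) c) * (y - c) ^ n =
        ((taylorWithinEval u n (Icc a b) x y - u y) * (-1 - (n : ℝ)) * n.factorial) * (y - c) ^ n := by
      linear_combination (y - c) ^ n * hmvt
    have h3 := mul_right_cancel₀ hyc h2
    linear_combination -h3
  · -- y = x
    refine ⟨x, Ioo_subset_Icc_self hx, ?_⟩
    subst h
    simp [taylorWithinEval_self]
  · -- x < y : mean value on [x, y]
    have hsub : Ioo x y ⊆ Ioo a b := Ioo_subset_Ioo hx.1.le hy.2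
    obtain ⟨c, hc, hmvt⟩ := exists_ratio_hasDerivAt_eq_ratio_slope
      (fun t => taylorWithinEval u n (Icc a b) t y)
      (fun t => ((n.factorial : ℝ)⁻¹ * (y - t) ^ n) • iteratedDerivWithin (n + 1) u (Icc a b) t)
      h (hφc.mono (Icc_subset_Icc hx.1.le hy.2))
      (fun t ht => taylorWithinEval_hasDerivAt_Ioo y hab (hsub ht) hf hf')
      (fun t => (y - t) ^ (n + 1)) (fun t => -(n + 1) * (y - t) ^ n)
      (by fun_prop) (fun t _ => monomial_has_deriv_aux t y n)
    refine ⟨c, Icc_subset_Icc hx.1.le hy.2 (Ioo_subset_Icc_self hc), ?_⟩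
    have hyc : (y - c) ^ n ≠ 0 := pow_ne_zero _ (by have := hc.2; intro hh; nlinarith [sub_eq_zero.mp hh])
    simp only [taylorWithinEval_self, smul_eq_mul, sub_self, zero_pow (Nat.succ_ne_zero n)] at hmvt
    have hfac : ((n + 1).factorial : ℝ) = (n + 1) * n.factorial := by
      rw [Nat.factorial_succ]; push_cast; ring
    rw [hfac]
    have hnf : (n.factorial : ℝ) ≠ 0 := Nat.cast_ne_zero.mpr n.factorial_ne_zero
    have hn1 : ((n : ℝ) + 1) ≠ 0 := by positivity
    rw [eq_div_iff (mul_ne_zero hn1 hnf)]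
    field_simp at hmvt
    have h2 : (-((y - x) ^ (n + 1)) * iteratedDerivWithin (n + 1) u (Icc a b) c) * (y - c) ^ n =
        ((u y - taylorWithinEval u n (Icc a b) x y) * (-1 - (n : ℝ)) * n.factorial) * (y - c) ^ n := by
      linear_combination (y - c) ^ n * hmvt
    have h3 := mul_right_cancel₀ hyc h2
    linear_combination h3

/-- Pointwise `O(r^{p+1})` estimate for shape functions reproducing
polynomials of degree `p`: if the values `ψ I` reproduce the monomials `(x_I − x)^k`
(`1` for `k = 0`, `0` for `1 ≤ k ≤ p`), are supported in `[x−r, x+r]`, and have total mass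
at most `Λ`, then for every `(p+1)`-times continuously differentiable `u`,
`|∑ ψ I · u(x_I) − u(x)| ≤ Λ·(r^{p+1}/(p+1)!)·sup |u^{(p+1)}|`. -/
theorem stmt_11 {ι : Type*} (S : Finset ι) (p : ℕ) (x r Λ : ℝ) (hr : 0 < r) (hΛ : 0 ≤ Λ)
    (xI : ι → ℝ) (ψ : ι → ℝ)
    (hrep : ∀ k : ℕ, k ≤ p →
      (∑ I ∈ S, ψ I * (xI I - x) ^ k) = if k = 0 then 1 else 0)
    (hloc : ∀ I ∈ S, ψ I ≠ 0 → xI I ∈ Set.Icc (x - r) (x + r))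
    (hstab : ∑ I ∈ S, |ψ I| ≤ Λ) :
    ∀ u : ℝ → ℝ, ContDiffOn ℝ (p + 1 : ℕ) u (Set.Icc (x - r) (x + r)) →
      |(∑ I ∈ S, ψ I * u (xI I)) - u x| ≤
        Λ * (r ^ (p + 1) / ((p + 1).factorial : ℝ)) *
          sSup ((fun t => |iteratedDerivWithin (p + 1) u (Set.Icc (x - r) (x + r)) t|) ''
            Set.Icc (x - r) (x + r)) := by
  intro u hu
  have hab : x - r < x + r := by linarith
  set s : Set ℝ := Set.Icc (x - r) (x + r) with hs
  have hxIoo : x ∈ Set.Ioo (x - r) (x + r) := ⟨by linarith, by linarith⟩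
  have hxs : x ∈ s := Set.Ioo_subset_Icc_self hxIoo
  set D : ℝ → ℝ := iteratedDerivWithin (p + 1) u s with hD
  set M : ℝ := sSup ((fun t => |D t|) '' s) with hM
  have hcont : ContinuousOn D s :=
    hu.continuousOn_iteratedDerivWithin le_rfl (uniqueDiffOn_Icc hab)
  have hbdd : BddAbove ((fun t => |D t|) '' s) :=
    (isCompact_Icc.image_of_continuousOn hcont.abs).bddAbove
  have hMle : ∀ t ∈ s, |D t| ≤ M := fun t ht => le_csSup hbdd ⟨t, ht, rfl⟩
  have hM0 : 0 ≤ M := le_trans (abs_nonneg _) (hMle x hxs)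
  set T : ℝ → ℝ := fun y => taylorWithinEval u p s x y with hT
  -- reproduction of the Taylor polynomial
  have hTa : ∀ y, T y = ∑ k ∈ Finset.range (p + 1),
      (((k.factorial : ℝ))⁻¹ * (y - x) ^ k) * iteratedDerivWithin k u s x := by
    intro y
    simpa [smul_eq_mul] using taylor_within_apply u p s x y
  have hTsum : ∑ I ∈ S, ψ I * T (xI I) = u x := by
    have step1 : ∑ I ∈ S, ψ I * T (xI I) = ∑ k ∈ Finset.range (p + 1),
        ((k.factorial : ℝ))⁻¹ * iteratedDerivWithin k u s x *
          ∑ I ∈ S, ψ I * (xI I - x) ^ k := by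
      simp only [hTa, Finset.mul_sum]
      rw [Finset.sum_comm]
      refine Finset.sum_congr rfl fun k _ => ?_
      exact Finset.sum_congr rfl fun I _ => by ring
    rw [step1, Finset.sum_eq_single 0]
    · rw [hrep 0 (Nat.zero_le p)]
      simp [iteratedDerivWithin_zero]
    · intro k hk hk0
      rw [hrep k (Nat.lt_succ_iff.mp (Finset.mem_range.mp hk)), if_neg hk0]
      ring
    · intro h; exact absurd (Finset.mem_range.mpr (Nat.succ_pos p)) h
  -- per-node bound
  set B : ℝ := r ^ (p + 1) / ((p + 1).factorial : ℝ) * M with hB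
  have hB0 : 0 ≤ B := by positivity
  have hnode : ∀ I ∈ S, |ψ I * (u (xI I) - T (xI I))| ≤ |ψ I| * B := by
    intro I hI
    by_cases hψ : ψ I = 0
    · simp [hψ]
    · obtain ⟨c, hc, hrem⟩ := taylor_remainder_two_sided hab hxIoo (hloc I hI hψ) hu
      rw [abs_mul]
      refine mul_le_mul_of_nonneg_left ?_ (abs_nonneg _)
      have hrem' : u (xI I) - T (xI I)
          = D c * (xI I - x) ^ (p + 1) / ((p + 1).factorial : ℝ) := hrem
      rw [hrem', hB, abs_div, abs_mul, Nat.abs_cast]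
      rw [div_mul_eq_mul_div, mul_comm (r ^ (p + 1)) M, div_le_div_iff_of_pos_right
        (by positivity : (0:ℝ) < ((p + 1).factorial : ℝ))]
      have h1 : |D c| ≤ M := hMle c hc
      have h2 : |(xI I - x) ^ (p + 1)| ≤ r ^ (p + 1) := by
        rw [abs_pow]
        refine pow_le_pow_left₀ (abs_nonneg _) ?_ _
        have hmem := hloc I hI hψ
        rw [abs_le]
        exact ⟨by linarith [hmem.1], by linarith [hmem.2]⟩
      exact mul_le_mul h1 h2 (abs_nonneg _) hM0
  -- assemble
  have key : (∑ I ∈ S, ψ I * u (xI I)) - u x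
      = ∑ I ∈ S, ψ I * (u (xI I) - T (xI I)) := by
    rw [← hTsum, ← Finset.sum_sub_distrib]
    exact Finset.sum_congr rfl fun I _ => by ring
  rw [key]
  have h4 : |∑ I ∈ S, ψ I * (u (xI I) - T (xI I))| ≤ (∑ I ∈ S, |ψ I|) * B := by
    refine le_trans (Finset.abs_sum_le_sum_abs _ _) ?_
    rw [Finset.sum_mul]
    exact Finset.sum_le_sum hnode
  refine le_trans h4 (le_trans (mul_le_mul_of_nonneg_right hstab hB0) ?_)
  rw [hB]; ring_nf; exact le_refl _
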